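/- Let N be a finite nontrivial a-near-ring. Then p := addOrderOf (1 : N) is a prime number and the additive group (N,+) has exponent p; in particular p • n = 0 for every n : N. -/

import Mathlib

/-- The additive group of a finite nontrivial a-near-ring has prime
exponent `p = addOrderOf 1`. -/
theorem stmt11 {N : Type*} [AddGroup N] [Mul N] [One N] [Finite N]
    (hassoc : ∀ a b c : N, (a * b) * c = a * (b * c))
    (hdist : ∀ a b c : N, (a + b) * c = a * c + b * c)
    (honel : ∀ a : N, 1 * a = a) (honer : ∀ a : N, a * 1 = a)
    (hzero : ∀ a : N, a * 0 = 0)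
    (ha : ∀ a b : N, (∃ v : N, a * v = 1 ∧ v * a = 1) →
      (∃ v : N, b * v = 1 ∧ v * b = 1) → a ≠ b →
      ∃ v : N, (a - b) * v = 1 ∧ v * (a - b) = 1)
    (hnt : (0 : N) ≠ 1) :
    Nat.Prime (addOrderOf (1 : N)) ∧ ∀ n : N, addOrderOf (1 : N) • n = 0 := by
  -- zero is left absorbing
  have hzmul : ∀ a : N, (0 : N) * a = 0 := by
    intro a
    have h := hdist 0 0 a
    rw [add_zero] at h
    have h2 : (0:N) * a + 0 = 0 * a + 0 * a := by rw [add_zero]; exact h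
    exact (add_left_cancel h2).symm
  -- (k • 1) * x = k • x
  have hsmul : ∀ (k : ℕ) (x : N), (k • (1 : N)) * x = k • x := by
    intro k x
    induction k with
    | zero => simp [hzmul]
    | succ n ih => rw [succ_nsmul, hdist, honel, succ_nsmul, ih]
  -- -1 is a unit
  have hneg : (-1 : N) * (-1) = 1 := by
    have h := hdist (-1) 1 (-1)
    rw [neg_add_cancel, hzmul, honel] at h
    have h2 : (-1:N) * (-1) + (-1) + 1 = 0 + 1 := by rw [h]
    rw [add_assoc, neg_add_cancel, add_zero, zero_add] at h2
    exact h2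
  -- every multiple of 1 is zero or a unit
  have key : ∀ k : ℕ, k • (1 : N) = 0 ∨
      ∃ v, (k • (1 : N)) * v = 1 ∧ v * (k • (1 : N)) = 1 := by
    intro k
    induction k with
    | zero => left; simp
    | succ n ih =>
      rw [succ_nsmul]
      rcases ih with h | ⟨v, hv1, hv2⟩
      · right; rw [h, zero_add]; exact ⟨1, honel 1, honel 1⟩
      · by_cases hne : n • (1 : N) = -1
        · left; rw [hne, neg_add_cancel]
        · right
          have := ha (n • (1 : N)) (-1) ⟨v, hv1, hv2⟩ ⟨-1, hneg, hneg⟩ hne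
          simpa [sub_neg_eq_add] using this
  have hfin : IsOfFinAddOrder (1 : N) := isOfFinAddOrder_of_finite 1
  have hp0 : 0 < addOrderOf (1 : N) := IsOfFinAddOrder.addOrderOf_pos hfin
  have hp1 : addOrderOf (1 : N) ≠ 1 := by
    intro h
    have := AddMonoid.addOrderOf_eq_one_iff.mp h
    exact hnt this.symm
  -- nonzero multiples below p
  have hnz : ∀ k : ℕ, 0 < k → k < addOrderOf (1 : N) → k • (1 : N) ≠ 0 := by
    intro k hk hklt h
    have hd := addOrderOf_dvd_of_nsmul_eq_zero h
    exact absurd (Nat.le_of_dvd hk hd) (not_le.mpr hklt)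
  constructor
  · rw [Nat.prime_def_lt]
    refine ⟨by omega, ?_⟩
    intro m hm hdvd
    by_contra hm1
    have hm0 : m ≠ 0 := by rintro rfl; simp only [zero_dvd_iff] at hdvd; omega
    have hm2 : 2 ≤ m := by omega
    obtain ⟨c, hc⟩ := hdvd
    have hcpos : 0 < c := by
      rcases Nat.eq_zero_or_pos c with h | h
      · subst h; rw [Nat.mul_zero] at hc; omega
      · exact h
    have hclt : c < addOrderOf (1 : N) := by nlinarith
    have hu : ∃ v, (m • (1 : N)) * v = 1 ∧ v * (m • (1 : N)) = 1 :=
      (key m).resolve_left (hnz m (by omega) hm)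
    have hv : ∃ v, (c • (1 : N)) * v = 1 ∧ v * (c • (1 : N)) = 1 :=
      (key c).resolve_left (hnz c hcpos hclt)
    obtain ⟨u, hu1, hu2⟩ := hu
    obtain ⟨w, hw1, hw2⟩ := hv
    have hprod : (m • (1 : N)) * (c • (1 : N)) = 0 := by
      rw [hsmul, ← mul_nsmul', ← hc, addOrderOf_nsmul_eq_zero]
    have : (0 : N) = 1 := by
      calc (0 : N) = 0 * (w * u) := (hzmul _).symm
        _ = (m • (1 : N)) * (c • (1 : N)) * (w * u) := by rw [hprod]
        _ = (m • (1 : N)) * ((c • (1 : N)) * w) * u := by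
            rw [hassoc, hassoc, hassoc]
        _ = 1 := by rw [hw1, honer, hu1]
    exact hnt this
  · intro n
    have := hsmul (addOrderOf (1 : N)) n
    rw [addOrderOf_nsmul_eq_zero, hzmul] at this
    exact this.symm
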